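/- Let H be a separable infinite-dimensional complex Hilbert space, 1 ≤ p < ∞, and S ∈ B(H) such that there is a constant C > 0 with [S, T] ∈ S_p(H) and ‖[S, T]‖_p ≤ C‖T‖ for every compact operator T ∈ K(H). Then [S, X] ∈ S_p(H) and ‖[S, X]‖_p ≤ C‖X‖ for every bounded operator X ∈ B(H). -/

import Mathlib

noncomputable section

variable {H : Type*} [NormedAddCommGroup H] [InnerProductSpace ℂ H]

/-- The `n`-th singular value (approximation number) of a bounded operator on a Hilbert
space: the distance of `T` to the operators of rank at most `n`. -/
def singularValue (T : H →L[ℂ] H) (n : ℕ) : ℝ :=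
  sInf ((fun F : H →L[ℂ] H => ‖T - F‖) ''
    {F : H →L[ℂ] H | LinearMap.rank (F : H →ₗ[ℂ] H) ≤ (n : Cardinal)})

/-- Membership in the Schatten `p`-class `S_p(H)`: a compact operator whose singular values
are `p`-summable. -/
def MemSchatten (p : ℝ) (T : H →L[ℂ] H) : Prop :=
  IsCompactOperator ⇑T ∧ Summable (fun n : ℕ => singularValue T n ^ p)

/-- The Schatten `p`-norm `‖T‖_p = (∑ₙ sₙ(T)^p)^(1/p)`. -/
def schattenNorm (p : ℝ) (T : H →L[ℂ] H) : ℝ :=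
  (∑' n : ℕ, singularValue T n ^ p) ^ (1 / p)

end

noncomputable section Aux

open Filter Finset

local notation "⟪" x ", " y "⟫" => @inner ℂ _ _ x y

variable {H : Type*} [NormedAddCommGroup H] [InnerProductSpace ℂ H]


lemma svSet_def (T : H →L[ℂ] H) (n : ℕ) :
    singularValue T n = sInf ((fun F : H →L[ℂ] H => ‖T - F‖) ''
      {F : H →L[ℂ] H | LinearMap.rank (F : H →ₗ[ℂ] H) ≤ (n : Cardinal)}) := rfl

lemma svSet_nonempty (T : H →L[ℂ] H) (n : ℕ) :
    ((fun F : H →L[ℂ] H => ‖T - F‖) ''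
      {F : H →L[ℂ] H | LinearMap.rank (F : H →ₗ[ℂ] H) ≤ (n : Cardinal)}).Nonempty := by
  refine ⟨‖T - 0‖, ⟨0, ?_, rfl⟩⟩
  simp [LinearMap.rank]

lemma svSet_bddBelow (T : H →L[ℂ] H) (n : ℕ) :
    BddBelow ((fun F : H →L[ℂ] H => ‖T - F‖) ''
      {F : H →L[ℂ] H | LinearMap.rank (F : H →ₗ[ℂ] H) ≤ (n : Cardinal)}) :=
  ⟨0, by rintro x ⟨F, -, rfl⟩; exact norm_nonneg _⟩

lemma singularValue_nonneg (T : H →L[ℂ] H) (n : ℕ) : 0 ≤ singularValue T n :=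
  le_csInf (svSet_nonempty T n) (by rintro x ⟨F, -, rfl⟩; exact norm_nonneg _)

lemma singularValue_le {T F : H →L[ℂ] H} {n : ℕ}
    (hF : LinearMap.rank (F : H →ₗ[ℂ] H) ≤ (n : Cardinal)) :
    singularValue T n ≤ ‖T - F‖ :=
  csInf_le (svSet_bddBelow T n) ⟨F, hF, rfl⟩

lemma singularValue_le_norm (T : H →L[ℂ] H) (n : ℕ) : singularValue T n ≤ ‖T‖ := by
  simpa using singularValue_le (T := T) (F := 0) (n := n) (by simp [LinearMap.rank])

lemma exists_rank_le_norm_lt (T : H →L[ℂ] H) (n : ℕ) {ε : ℝ} (hε : 0 < ε) :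
    ∃ F : H →L[ℂ] H, LinearMap.rank (F : H →ₗ[ℂ] H) ≤ (n : Cardinal) ∧
      ‖T - F‖ < singularValue T n + ε := by
  have h : sInf ((fun F : H →L[ℂ] H => ‖T - F‖) ''
      {F : H →L[ℂ] H | LinearMap.rank (F : H →ₗ[ℂ] H) ≤ (n : Cardinal)})
      < singularValue T n + ε := by
    rw [← svSet_def]; linarith
  rw [csInf_lt_iff (svSet_bddBelow T n) (svSet_nonempty T n)] at h
  obtain ⟨x, ⟨F, hF, rfl⟩, hx⟩ := h
  exact ⟨F, hF, hx⟩



/-- finite rank implies compact -/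
lemma isCompactOperator_of_rank_le (F : H →L[ℂ] H) (k : ℕ)
    (h : LinearMap.rank (F : H →ₗ[ℂ] H) ≤ (k : Cardinal)) : IsCompactOperator ⇑F := by
  set W := LinearMap.range (F : H →ₗ[ℂ] H) with hW
  haveI : Module.Finite ℂ W :=
    Module.rank_lt_aleph0_iff.mp (lt_of_le_of_lt h (Cardinal.nat_lt_aleph0 k))
  haveI : ProperSpace W := FiniteDimensional.proper ℂ W
  refine ⟨Subtype.val '' Metric.closedBall (0 : W) ‖F‖, (isCompact_closedBall _ _).image
    continuous_subtype_val, ?_⟩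
  refine Filter.mem_of_superset (Metric.closedBall_mem_nhds 0 one_pos) ?_
  intro x hx
  refine ⟨⟨F x, LinearMap.mem_range_self _ x⟩, ?_, rfl⟩
  simp only [Metric.mem_closedBall, dist_zero_right]
  calc ‖(⟨F x, _⟩ : W)‖ = ‖F x‖ := rfl
    _ ≤ ‖F‖ * ‖x‖ := F.le_opNorm x
    _ ≤ ‖F‖ * 1 := by
        have := Metric.mem_closedBall.1 hx
        rw [dist_zero_right] at this
        exact mul_le_mul_of_nonneg_left this (norm_nonneg F)
    _ = ‖F‖ := mul_one _

/-- rank ≤ k decomposition into rank ones with bounded vectors -/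
lemma exists_rank_one_decomposition [CompleteSpace H] (F : H →L[ℂ] H) (k : ℕ)
    (h : LinearMap.rank (F : H →ₗ[ℂ] H) ≤ (k : Cardinal)) :
    ∃ u v : ℕ → H, (∀ i, ‖u i‖ ≤ 1) ∧ (∀ i, ‖v i‖ ≤ ‖F‖) ∧
      ∀ x, F x = ∑ i ∈ range k, ⟪v i, x⟫ • u i := by
  set W := LinearMap.range (F : H →ₗ[ℂ] H) with hW
  haveI : FiniteDimensional ℂ W :=
    Module.rank_lt_aleph0_iff.mp (lt_of_le_of_lt h (Cardinal.nat_lt_aleph0 k))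
  set d := Module.finrank ℂ W with hd
  have hdk : d ≤ k := Module.finrank_le_of_rank_le h
  set b := stdOrthonormalBasis ℂ W
  set u : ℕ → H := fun i => if hi : i < d then (b ⟨i, hi⟩ : H) else 0 with hu
  set v : ℕ → H := fun i => if hi : i < d then
      ContinuousLinearMap.adjoint F (b ⟨i, hi⟩ : H) else 0 with hv
  refine ⟨u, v, ?_, ?_, ?_⟩
  · intro i
    by_cases hi : i < d
    · simp only [hu, dif_pos hi]
      have h2 : ‖((b ⟨i, hi⟩ : W) : H)‖ = ‖b ⟨i, hi⟩‖ := rfl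
      rw [h2, b.orthonormal.1 ⟨i, hi⟩]
    · simp [hu, dif_neg hi]
  · intro i
    by_cases hi : i < d
    · simp only [hv, dif_pos hi]
      calc ‖ContinuousLinearMap.adjoint F (b ⟨i, hi⟩ : H)‖
          ≤ ‖ContinuousLinearMap.adjoint F‖ * ‖(b ⟨i, hi⟩ : H)‖ :=
            (ContinuousLinearMap.adjoint F).le_opNorm _
        _ = ‖F‖ := by
            have h2 : ‖((b ⟨i, hi⟩ : W) : H)‖ = ‖b ⟨i, hi⟩‖ := rfl
            rw [h2, b.orthonormal.1 ⟨i, hi⟩, mul_one]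
            exact LinearIsometryEquiv.norm_map ContinuousLinearMap.adjoint F
    · simp [hv, dif_neg hi, norm_nonneg]
  · intro x
    have hmem : F x ∈ W := LinearMap.mem_range_self _ x
    have hrepr : ∑ j : Fin d, b.repr ⟨F x, hmem⟩ j • b j = ⟨F x, hmem⟩ := b.sum_repr _
    have hcoe : F x = ∑ j : Fin d, b.repr ⟨F x, hmem⟩ j • (b j : H) := by
      have := congrArg (Subtype.val) hrepr
      simpa using this.symm
    rw [hcoe]
    have hsum : ∑ i ∈ range k, ⟪v i, x⟫ • u i = ∑ i ∈ range d, ⟪v i, x⟫ • u i := by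
      refine (Finset.sum_subset (Finset.range_subset_range.2 hdk) ?_).symm
      intro i _ hi
      rw [Finset.mem_range, not_lt] at hi
      simp [hv, hu, dif_neg (not_lt.2 hi)]
    rw [hsum, Finset.sum_range fun j => ⟪v j, x⟫ • u j]
    refine Finset.sum_congr rfl fun j _ => ?_
    have hj : (j : ℕ) < d := j.isLt
    have hveq : v (j : ℕ) = ContinuousLinearMap.adjoint F ((b ⟨(j : ℕ), hj⟩ : W) : H) := by
      simp only [hv, dif_pos hj]
    have hueq : u (j : ℕ) = ((b ⟨(j : ℕ), hj⟩ : W) : H) := by simp only [hu, dif_pos hj]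
    have hbj : (⟨(j : ℕ), hj⟩ : Fin d) = j := by ext; rfl
    rw [hveq, hueq, hbj]
    congr 1
    rw [ContinuousLinearMap.adjoint_inner_left, b.repr_apply_apply, Submodule.coe_inner]


/-- the rank-one sum operator -/
noncomputable def rankOneSum (k : ℕ) (v u : ℕ → H) : H →L[ℂ] H :=
  ∑ i ∈ range k, (innerSL ℂ (v i)).smulRight (u i)

lemma rankOneSum_apply (k : ℕ) (v u : ℕ → H) (x : H) :
    rankOneSum k v u x = ∑ i ∈ range k, ⟪v i, x⟫ • u i := by
  simp [rankOneSum, ContinuousLinearMap.sum_apply]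

lemma rank_rankOneSum_le (k : ℕ) (v u : ℕ → H) :
    LinearMap.rank ((rankOneSum k v u : H →L[ℂ] H) : H →ₗ[ℂ] H) ≤ (k : Cardinal) := by
  have hrange : LinearMap.range ((rankOneSum k v u : H →L[ℂ] H) : H →ₗ[ℂ] H)
      ≤ Submodule.span ℂ (Set.range (fun i : Fin k => u i)) := by
    rintro y ⟨x, rfl⟩
    have : rankOneSum k v u x = ∑ i ∈ range k, ⟪v i, x⟫ • u i := rankOneSum_apply k v u x
    rw [show (((rankOneSum k v u : H →L[ℂ] H) : H →ₗ[ℂ] H) x) = rankOneSum k v u x from rfl, this]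
    refine Submodule.sum_mem _ fun i hi => Submodule.smul_mem _ _ (Submodule.subset_span ?_)
    exact ⟨⟨i, Finset.mem_range.1 hi⟩, rfl⟩
  have hlift := Cardinal.mk_range_le_lift (f := fun i : Fin k => u i)
  calc LinearMap.rank ((rankOneSum k v u : H →L[ℂ] H) : H →ₗ[ℂ] H)
      ≤ Module.rank ℂ (Submodule.span ℂ (Set.range (fun i : Fin k => u i))) :=
        Submodule.rank_mono hrange
    _ ≤ Cardinal.mk (Set.range (fun i : Fin k => u i)) := rank_span_le _
    _ ≤ (k : Cardinal) := by
        have := Cardinal.mk_range_le_lift (f := fun i : Fin k => u i)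
        simpa [Cardinal.mk_fin, Cardinal.lift_natCast] using this


lemma exists_ultralimit_of_bounded {E : Type*} [NormedAddCommGroup E] [ProperSpace E]
    (𝒰 : Ultrafilter ℕ) (f : ℕ → E) (M : ℝ) (h : ∀ n, ‖f n‖ ≤ M) :
    ∃ L, ‖L‖ ≤ M ∧ Tendsto f (𝒰 : Filter ℕ) (nhds L) := by
  have hK : IsCompact (Metric.closedBall (0 : E) M) := isCompact_closedBall _ _
  have hle : (Ultrafilter.map f 𝒰 : Filter E) ≤ Filter.principal (Metric.closedBall 0 M) := by
    rw [Filter.le_principal_iff, Ultrafilter.coe_map, Filter.mem_map]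
    filter_upwards with n
    simpa [Metric.mem_closedBall, dist_zero_right] using h n
  obtain ⟨L, hLmem, hL⟩ := hK.ultrafilter_le_nhds (Ultrafilter.map f 𝒰) hle
  refine ⟨L, by simpa [Metric.mem_closedBall, dist_zero_right] using hLmem, ?_⟩
  rwa [Ultrafilter.coe_map] at hL

lemma exists_weak_ultralimit [CompleteSpace H] (𝒰 : Ultrafilter ℕ) (w : ℕ → H) (M : ℝ)
    (hM : ∀ n, ‖w n‖ ≤ M) :
    ∃ z : H, ‖z‖ ≤ M ∧ ∀ y : H, Tendsto (fun n => ⟪w n, y⟫) (𝒰 : Filter ℕ) (nhds ⟪z, y⟫) := by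
  have hM0 : 0 ≤ M := le_trans (norm_nonneg _) (hM 0)
  have hexists : ∀ y : H, ∃ L : ℂ, Tendsto (fun n => ⟪w n, y⟫) (𝒰 : Filter ℕ) (nhds L) := by
    intro y
    obtain ⟨L, -, hL⟩ := exists_ultralimit_of_bounded 𝒰 (fun n => ⟪w n, y⟫) (M * ‖y‖)
      (fun n => le_trans (norm_inner_le_norm _ _)
        (mul_le_mul_of_nonneg_right (hM n) (norm_nonneg y)))
    exact ⟨L, hL⟩
  choose φ hφ using hexists
  have hadd : ∀ y₁ y₂, φ (y₁ + y₂) = φ y₁ + φ y₂ := fun y₁ y₂ =>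
    tendsto_nhds_unique (hφ _) (by simpa [inner_add_right] using (hφ y₁).add (hφ y₂))
  have hsmul : ∀ (c : ℂ) (y : H), φ (c • y) = c • φ y := fun c y =>
    tendsto_nhds_unique (hφ _)
      (by simpa [inner_smul_right, smul_eq_mul] using (hφ y).const_mul c)
  have hbound : ∀ y, ‖φ y‖ ≤ M * ‖y‖ := fun y =>
    le_of_tendsto (hφ y).norm (Filter.Eventually.of_forall fun n =>
      le_trans (norm_inner_le_norm _ _) (mul_le_mul_of_nonneg_right (hM n) (norm_nonneg y)))
  set f : H →L[ℂ] ℂ := LinearMap.mkContinuous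
    { toFun := φ, map_add' := hadd, map_smul' := hsmul } M hbound with hf
  have hfy : ∀ y, f y = φ y := fun y => rfl
  set z := (InnerProductSpace.toDual ℂ H).symm f with hz
  refine ⟨z, ?_, fun y => ?_⟩
  · have h1 : ‖z‖ = ‖f‖ := (InnerProductSpace.toDual ℂ H).symm.norm_map f
    rw [h1]
    exact LinearMap.mkContinuous_norm_le _ hM0 _
  · have h2 : ⟪z, y⟫ = f y := InnerProductSpace.toDual_symm_apply
    rw [h2, hfy]
    exact hφ y

lemma opNorm_le_of_wot_ultralimit (𝒰 : Ultrafilter ℕ) (A : ℕ → H →L[ℂ] H) (B : H →L[ℂ] H)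
    (M : ℝ) (hM0 : 0 ≤ M) (hM : ∀ᶠ n in (𝒰 : Filter ℕ), ‖A n‖ ≤ M)
    (hconv : ∀ x y : H, Tendsto (fun n => ⟪A n x, y⟫) (𝒰 : Filter ℕ) (nhds ⟪B x, y⟫)) :
    ‖B‖ ≤ M := by
  refine B.opNorm_le_bound hM0 fun x => ?_
  have h1 : ‖⟪B x, B x⟫‖ ≤ M * ‖x‖ * ‖B x‖ := by
    refine le_of_tendsto (hconv x (B x)).norm (hM.mono fun n hn => ?_)
    calc ‖⟪A n x, B x⟫‖ ≤ ‖A n x‖ * ‖B x‖ := norm_inner_le_norm _ _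
      _ ≤ (M * ‖x‖) * ‖B x‖ := by
          refine mul_le_mul_of_nonneg_right ?_ (norm_nonneg _)
          exact le_trans ((A n).le_opNorm x) (mul_le_mul_of_nonneg_right hn (norm_nonneg x))
  have h2 : ‖B x‖ * ‖B x‖ ≤ ‖⟪B x, B x⟫‖ := by
    rw [← @inner_self_eq_norm_mul_norm ℂ]
    exact RCLike.re_le_norm _
  rcases (norm_nonneg (B x)).eq_or_lt with h | h
  · rw [← h]; positivity
  · exact le_of_mul_le_mul_right (le_trans h2 h1) h

lemma singularValue_le_ultralimit [CompleteSpace H] (𝒰 : Ultrafilter ℕ)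
    (T : ℕ → H →L[ℂ] H) (B : H →L[ℂ] H) (M : ℝ) (hM : ∀ n, ‖T n‖ ≤ M)
    (hconv : ∀ x y : H, Tendsto (fun n => ⟪T n x, y⟫) (𝒰 : Filter ℕ) (nhds ⟪B x, y⟫))
    (k : ℕ) (r : ℝ)
    (hr : Tendsto (fun n => singularValue (T n) k) (𝒰 : Filter ℕ) (nhds r)) :
    singularValue B k ≤ r := by
  have hr0 : 0 ≤ r := ge_of_tendsto hr
    (Filter.Eventually.of_forall fun n => singularValue_nonneg (T n) k)
  have hM0 : 0 ≤ M := le_trans (norm_nonneg _) (hM 0)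
  refine le_of_forall_pos_le_add fun ε hε => ?_
  have hFex : ∀ n, ∃ F : H →L[ℂ] H, LinearMap.rank (F : H →ₗ[ℂ] H) ≤ (k : Cardinal) ∧
      ‖T n - F‖ < singularValue (T n) k + ε := fun n => exists_rank_le_norm_lt (T n) k hε
  choose F hFrank hFnorm using hFex
  have hFb : ∀ n, ‖F n‖ ≤ 2 * M + ε := by
    intro n
    have h1 : ‖F n‖ ≤ ‖T n - F n‖ + ‖T n‖ := by
      calc ‖F n‖ = ‖T n - (T n - F n)‖ := by rw [sub_sub_cancel]
        _ ≤ ‖T n‖ + ‖T n - F n‖ := norm_sub_le _ _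
        _ = ‖T n - F n‖ + ‖T n‖ := by ring
    have h2 : singularValue (T n) k ≤ ‖T n‖ := singularValue_le_norm _ _
    have h3 := hFnorm n
    have h4 := hM n
    linarith
  have hdec := fun n => exists_rank_one_decomposition (F n) k (hFrank n)
  choose u v hu hv hFx using hdec
  have hulim : ∀ i, ∃ z : H, ‖z‖ ≤ 1 ∧
      ∀ y : H, Tendsto (fun n => ⟪u n i, y⟫) (𝒰 : Filter ℕ) (nhds ⟪z, y⟫) :=
    fun i => exists_weak_ultralimit 𝒰 (fun n => u n i) 1 (fun n => hu n i)
  choose uh hu1 huconv using hulim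
  have hvlim : ∀ i, ∃ z : H, ‖z‖ ≤ 2 * M + ε ∧
      ∀ y : H, Tendsto (fun n => ⟪v n i, y⟫) (𝒰 : Filter ℕ) (nhds ⟪z, y⟫) :=
    fun i => exists_weak_ultralimit 𝒰 (fun n => v n i) (2 * M + ε)
      (fun n => le_trans (hv n i) (hFb n))
  choose vh hv1 hvconv using hvlim
  set G := rankOneSum k vh uh with hGdef
  have hGrank := rank_rankOneSum_le k vh uh
  have hFconv : ∀ x y : H, Tendsto (fun n => ⟪F n x, y⟫) (𝒰 : Filter ℕ) (nhds ⟪G x, y⟫) := by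
    intro x y
    have hx : (fun n => ⟪F n x, y⟫) =
        fun n => ∑ i ∈ range k, (starRingEnd ℂ) ⟪v n i, x⟫ * ⟪u n i, y⟫ := by
      funext n
      rw [hFx n x, sum_inner]
      exact Finset.sum_congr rfl fun i _ => inner_smul_left _ _ _
    have hG : ⟪G x, y⟫ = ∑ i ∈ range k, (starRingEnd ℂ) ⟪vh i, x⟫ * ⟪uh i, y⟫ := by
      rw [hGdef, rankOneSum_apply, sum_inner]
      exact Finset.sum_congr rfl fun i _ => inner_smul_left _ _ _
    rw [hx, hG]
    refine tendsto_finset_sum _ fun i _ => Tendsto.mul ?_ (huconv i y)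
    simpa only [← starRingEnd_apply] using (hvconv i x).star
  have hsub : ∀ x y : H,
      Tendsto (fun n => ⟪(T n - F n) x, y⟫) (𝒰 : Filter ℕ) (nhds ⟪(B - G) x, y⟫) := by
    intro x y
    simpa only [ContinuousLinearMap.sub_apply, inner_sub_left] using
      (hconv x y).sub (hFconv x y)
  have hnormBG : ‖B - G‖ ≤ r + ε := by
    refine le_of_forall_pos_le_add fun δ hδ => ?_
    refine opNorm_le_of_wot_ultralimit 𝒰 _ _ _ (by positivity) ?_ hsub
    have hev := hr.eventually_lt_const (show r < r + δ by linarith)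
    refine hev.mono fun n hn => ?_
    have := hFnorm n
    linarith
  exact le_trans (singularValue_le hGrank) hnormBG


def projCLM (W : Submodule ℂ H) [Submodule.HasOrthogonalProjection W] : H →L[ℂ] H :=
  W.subtypeL.comp (Submodule.orthogonalProjectionOnto W)

lemma projCLM_mem (W : Submodule ℂ H) [Submodule.HasOrthogonalProjection W] (x : H) :
    projCLM W x ∈ W := (Submodule.orthogonalProjectionOnto W x).2

lemma projCLM_norm_apply_le (W : Submodule ℂ H) [Submodule.HasOrthogonalProjection W] (x : H) :
    ‖projCLM W x‖ ≤ ‖x‖ := by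
  have h1 : projCLM W x = (Submodule.orthogonalProjectionOnto W x : H) := rfl
  have h2 : ‖(Submodule.orthogonalProjectionOnto W x : H)‖ = ‖Submodule.orthogonalProjectionOnto W x‖ := rfl
  rw [h1, h2]
  calc ‖Submodule.orthogonalProjectionOnto W x‖ ≤ ‖Submodule.orthogonalProjectionOnto W‖ * ‖x‖ :=
        (Submodule.orthogonalProjectionOnto W).le_opNorm x
    _ ≤ 1 * ‖x‖ := mul_le_mul_of_nonneg_right (Submodule.orthogonalProjectionOnto_norm_le W) (norm_nonneg x)
    _ = ‖x‖ := one_mul _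

lemma projCLM_dist_le (W : Submodule ℂ H) [Submodule.HasOrthogonalProjection W] (x : H) {w : H}
    (hw : w ∈ W) : ‖x - projCLM W x‖ ≤ ‖x - w‖ := by
  have h1 : projCLM W x = (Submodule.orthogonalProjectionOnto W x : H) := rfl
  rw [h1, ← Submodule.starProjection_apply, Submodule.starProjection_minimal]
  exact ciInf_le ⟨0, by rintro z ⟨u, rfl⟩; exact norm_nonneg _⟩ (⟨w, hw⟩ : W)

lemma isCompactOperator_of_forall_mem (W : Submodule ℂ H) [FiniteDimensional ℂ W]
    (F : H →L[ℂ] H) (h : ∀ x, F x ∈ W) : IsCompactOperator ⇑F := by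
  haveI : ProperSpace W := FiniteDimensional.proper ℂ W
  refine ⟨Subtype.val '' Metric.closedBall (0 : W) ‖F‖, (isCompact_closedBall _ _).image
    continuous_subtype_val, ?_⟩
  refine Filter.mem_of_superset (Metric.closedBall_mem_nhds 0 one_pos) ?_
  intro x hx
  refine ⟨⟨F x, h x⟩, ?_, rfl⟩
  simp only [Metric.mem_closedBall, dist_zero_right]
  calc ‖(⟨F x, h x⟩ : W)‖ = ‖F x‖ := rfl
    _ ≤ ‖F‖ * ‖x‖ := F.le_opNorm x
    _ ≤ ‖F‖ * 1 := by
        have hx1 := Metric.mem_closedBall.1 hx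
        rw [dist_zero_right] at hx1
        exact mul_le_mul_of_nonneg_left hx1 (norm_nonneg F)
    _ = ‖F‖ := mul_one _

end Aux

open Filter Finset

local notation "⟪" x ", " y "⟫" => @inner ℂ _ _ x y

/-- If `[S, T] ∈ S_p(H)` with `‖[S, T]‖_p ≤ C‖T‖` for every compact `T`, then the same
holds for every bounded operator `X`: `[S, X] ∈ S_p(H)` and `‖[S, X]‖_p ≤ C‖X‖`. -/
theorem schatten_commutator_bound_extends_to_bounded_operators
    (H : Type*) [NormedAddCommGroup H] [InnerProductSpace ℂ H] [CompleteSpace H]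
    [TopologicalSpace.SeparableSpace H] (hinf : ¬ FiniteDimensional ℂ H)
    (p : ℝ) (hp : 1 ≤ p) (S : H →L[ℂ] H) (C : ℝ) (hC : 0 < C)
    (hS : ∀ T : H →L[ℂ] H, IsCompactOperator ⇑T →
      MemSchatten p (S * T - T * S) ∧ schattenNorm p (S * T - T * S) ≤ C * ‖T‖) :
    ∀ X : H →L[ℂ] H,
      MemSchatten p (S * X - X * S) ∧ schattenNorm p (S * X - X * S) ≤ C * ‖X‖ := by
  classical
  have hp0 : (0 : ℝ) < p := lt_of_lt_of_le zero_lt_one hp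
  have hpne : p ≠ 0 := ne_of_gt hp0
  intro X
  obtain ⟨dS, hdense⟩ := TopologicalSpace.exists_dense_seq H
  set P : ℕ → H →L[ℂ] H := fun n =>
    projCLM (Submodule.span ℂ (((Finset.range n).image dS : Finset H) : Set H)) with hP
  set Xn : ℕ → H →L[ℂ] H := fun n => (P n).comp (X.comp (P n)) with hXn
  have hXnc : ∀ n, IsCompactOperator ⇑(Xn n) := fun n =>
    isCompactOperator_of_forall_mem _ _ (fun x => projCLM_mem _ _)
  have hXnnorm : ∀ n, ‖Xn n‖ ≤ ‖X‖ := by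
    intro n
    refine ContinuousLinearMap.opNorm_le_bound _ (norm_nonneg X) fun x => ?_
    calc ‖Xn n x‖ = ‖P n (X (P n x))‖ := rfl
      _ ≤ ‖X (P n x)‖ := projCLM_norm_apply_le _ _
      _ ≤ ‖X‖ * ‖P n x‖ := X.le_opNorm _
      _ ≤ ‖X‖ * ‖x‖ := mul_le_mul_of_nonneg_left (projCLM_norm_apply_le _ _) (norm_nonneg X)
  have hPtend : ∀ x : H, Tendsto (fun n => P n x) atTop (nhds x) := by
    intro x
    rw [Metric.tendsto_atTop]
    intro ε hε
    obtain ⟨m, hm⟩ := hdense.exists_dist_lt x hε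
    refine ⟨m + 1, fun n hn => ?_⟩
    have hmem : dS m ∈ Submodule.span ℂ (((Finset.range n).image dS : Finset H) : Set H) :=
      Submodule.subset_span (by
        simp only [Finset.coe_image, Set.mem_image, Finset.mem_coe, Finset.mem_range]
        exact ⟨m, by omega, rfl⟩)
    have hd := projCLM_dist_le _ x hmem
    calc dist (P n x) x = ‖x - P n x‖ := by rw [dist_comm, dist_eq_norm]
      _ ≤ ‖x - dS m‖ := hd
      _ = dist x (dS m) := (dist_eq_norm _ _).symm
      _ < ε := hm
  set T : H →L[ℂ] H := S * X - X * S with hT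
  set Tn : ℕ → H →L[ℂ] H := fun n => S * Xn n - Xn n * S with hTndef
  have hTn : ∀ n, MemSchatten p (Tn n) ∧ schattenNorm p (Tn n) ≤ C * ‖Xn n‖ := fun n =>
    hS (Xn n) (hXnc n)
  have hXx : ∀ x : H, Tendsto (fun n => Xn n x) atTop (nhds (X x)) := by
    intro x
    have h1 : Tendsto (fun n => X (P n x)) atTop (nhds (X x)) :=
      (X.continuous.tendsto _).comp (hPtend x)
    rw [tendsto_iff_norm_sub_tendsto_zero]
    have hb : ∀ n, ‖Xn n x - X x‖ ≤ ‖X (P n x) - X x‖ + ‖P n (X x) - X x‖ := by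
      intro n
      have he : Xn n x - X x = P n (X (P n x)) - P n (X x) + (P n (X x) - X x) := by
        have : Xn n x = P n (X (P n x)) := rfl
        rw [this]; abel
      rw [he]
      refine le_trans (norm_add_le _ _) (add_le_add_left ?_ _)
      have : P n (X (P n x)) - P n (X x) = P n (X (P n x) - X x) := (map_sub _ _ _).symm
      rw [this]
      exact projCLM_norm_apply_le _ _
    have h2 : Tendsto (fun n => ‖X (P n x) - X x‖ + ‖P n (X x) - X x‖) atTop (nhds 0) := by
      have ha : Tendsto (fun n => ‖X (P n x) - X x‖) atTop (nhds 0) := by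
        rw [← tendsto_iff_norm_sub_tendsto_zero]; exact h1
      have hbb : Tendsto (fun n => ‖P n (X x) - X x‖) atTop (nhds 0) := by
        rw [← tendsto_iff_norm_sub_tendsto_zero]; exact hPtend (X x)
      simpa using ha.add hbb
    exact squeeze_zero (fun n => norm_nonneg _) hb h2
  have hTx : ∀ x : H, Tendsto (fun n => Tn n x) atTop (nhds (T x)) := by
    intro x
    have h1 : Tendsto (fun n => S (Xn n x)) atTop (nhds (S (X x))) :=
      (S.continuous.tendsto _).comp (hXx x)
    have h2 : Tendsto (fun n => Xn n (S x)) atTop (nhds (X (S x))) := hXx (S x)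
    exact h1.sub h2
  set 𝒰 := Ultrafilter.of (atTop : Filter ℕ) with h𝒰def
  have h𝒰 : (𝒰 : Filter ℕ) ≤ atTop := Ultrafilter.of_le _
  have hWOT : ∀ x y : H, Tendsto (fun n => ⟪Tn n x, y⟫) (𝒰 : Filter ℕ) (nhds ⟪T x, y⟫) :=
    fun x y => (((hTx x).mono_left h𝒰).inner tendsto_const_nhds)
  have hTnnorm : ∀ n, ‖Tn n‖ ≤ 2 * ‖S‖ * ‖X‖ := by
    intro n
    calc ‖Tn n‖ ≤ ‖S * Xn n‖ + ‖Xn n * S‖ := norm_sub_le _ _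
      _ ≤ ‖S‖ * ‖Xn n‖ + ‖Xn n‖ * ‖S‖ := add_le_add (norm_mul_le _ _) (norm_mul_le _ _)
      _ ≤ ‖S‖ * ‖X‖ + ‖X‖ * ‖S‖ := add_le_add
          (mul_le_mul_of_nonneg_left (hXnnorm n) (norm_nonneg S))
          (mul_le_mul_of_nonneg_right (hXnnorm n) (norm_nonneg S))
      _ = 2 * ‖S‖ * ‖X‖ := by ring
  have hb : ∀ n, (∑' k : ℕ, singularValue (Tn n) k ^ p) ≤ (C * ‖X‖) ^ p := by
    intro n
    have h3 : schattenNorm p (Tn n) ≤ C * ‖X‖ :=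
      le_trans (hTn n).2 (mul_le_mul_of_nonneg_left (hXnnorm n) hC.le)
    have hts : 0 ≤ ∑' k : ℕ, singularValue (Tn n) k ^ p :=
      tsum_nonneg fun k => Real.rpow_nonneg (singularValue_nonneg _ _) p
    have h4 := Real.rpow_le_rpow (Real.rpow_nonneg hts (1 / p)) h3 hp0.le
    rwa [← Real.rpow_mul hts, one_div_mul_cancel hpne, Real.rpow_one] at h4
  have hrex : ∀ k : ℕ, ∃ r : ℝ,
      Tendsto (fun n => singularValue (Tn n) k) (𝒰 : Filter ℕ) (nhds r) := by
    intro k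
    obtain ⟨r, -, hr⟩ := exists_ultralimit_of_bounded 𝒰 (fun n => singularValue (Tn n) k)
      (2 * ‖S‖ * ‖X‖) (fun n => by
        rw [Real.norm_eq_abs, abs_of_nonneg (singularValue_nonneg _ _)]
        exact le_trans (singularValue_le_norm _ _) (hTnnorm n))
    exact ⟨r, hr⟩
  choose r hr using hrex
  have hsk : ∀ k, singularValue T k ≤ r k := fun k =>
    singularValue_le_ultralimit 𝒰 Tn T (2 * ‖S‖ * ‖X‖) hTnnorm hWOT k (r k) (hr k)
  have hrsum : ∀ m, ∑ k ∈ range m, (r k) ^ p ≤ (C * ‖X‖) ^ p := by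
    intro m
    have htend : Tendsto (fun n => ∑ k ∈ range m, singularValue (Tn n) k ^ p) (𝒰 : Filter ℕ)
        (nhds (∑ k ∈ range m, (r k) ^ p)) := by
      refine tendsto_finset_sum _ fun k _ => ?_
      exact (Real.continuousAt_rpow_const (r k) p (Or.inr hp0.le)).tendsto.comp (hr k)
    refine le_of_tendsto htend (Filter.Eventually.of_forall fun n => ?_)
    refine le_trans (Summable.sum_le_tsum (range m)
      (fun k _ => Real.rpow_nonneg (singularValue_nonneg _ _) p) (hTn n).1.2) (hb n)
  have hTsum : ∀ m, ∑ k ∈ range m, singularValue T k ^ p ≤ (C * ‖X‖) ^ p := by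
    intro m
    refine le_trans (Finset.sum_le_sum fun k _ =>
      Real.rpow_le_rpow (singularValue_nonneg _ _) (hsk k) hp0.le) (hrsum m)
  have hsummable : Summable (fun k : ℕ => singularValue T k ^ p) :=
    summable_of_sum_range_le (fun k => Real.rpow_nonneg (singularValue_nonneg _ _) p) hTsum
  have htsum_le : (∑' k : ℕ, singularValue T k ^ p) ≤ (C * ‖X‖) ^ p :=
    Summable.tsum_le_of_sum_range_le hsummable hTsum
  have hsv_tendsto : Tendsto (fun k => singularValue T k) atTop (nhds 0) := by
    have h1 : Tendsto (fun k : ℕ => singularValue T k ^ p) atTop (nhds 0) :=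
      hsummable.tendsto_atTop_zero
    have h2 := (Real.continuousAt_rpow_const 0 (1 / p) (Or.inr (by positivity))).tendsto.comp h1
    rw [Real.zero_rpow (by positivity : (1 : ℝ) / p ≠ 0)] at h2
    have h3 : ∀ k, (singularValue T k ^ p) ^ (1 / p) = singularValue T k := fun k => by
      rw [← Real.rpow_mul (singularValue_nonneg _ _), mul_one_div_cancel hpne, Real.rpow_one]
    simpa only [Function.comp_def, h3] using h2
  have hcompact : IsCompactOperator ⇑T := by
    have hFk : ∀ k : ℕ, ∃ F : H →L[ℂ] H, LinearMap.rank (F : H →ₗ[ℂ] H) ≤ (k : Cardinal) ∧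
        ‖T - F‖ < singularValue T k + 1 / (k + 1) := fun k =>
      exists_rank_le_norm_lt T k (by positivity)
    choose Fk hFkrank hFknorm using hFk
    have hFtend : Tendsto Fk atTop (nhds T) := by
      rw [tendsto_iff_norm_sub_tendsto_zero]
      have hss : ∀ k, ‖Fk k - T‖ ≤ singularValue T k + 1 / (k + 1) := fun k => by
        rw [norm_sub_rev]; exact (hFknorm k).le
      have hlim : Tendsto (fun k : ℕ => singularValue T k + 1 / (k + 1)) atTop (nhds 0) := by
        have := hsv_tendsto.add tendsto_one_div_add_atTop_nhds_zero_nat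
        simpa using this
      exact squeeze_zero (fun k => norm_nonneg _) hss hlim
    exact isCompactOperator_of_tendsto hFtend
      (Filter.Eventually.of_forall fun k => isCompactOperator_of_rank_le (Fk k) k (hFkrank k))
  refine ⟨⟨hcompact, hsummable⟩, ?_⟩
  have hfin : schattenNorm p T = (∑' k : ℕ, singularValue T k ^ p) ^ (1 / p) := rfl
  rw [hfin]
  calc (∑' k : ℕ, singularValue T k ^ p) ^ (1 / p) ≤ ((C * ‖X‖) ^ p) ^ (1 / p) :=
      Real.rpow_le_rpow (tsum_nonneg fun k => Real.rpow_nonneg (singularValue_nonneg _ _) p)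
        htsum_le (by positivity)
    _ = C * ‖X‖ := by
        rw [← Real.rpow_mul (by positivity : (0:ℝ) ≤ C * ‖X‖), mul_one_div_cancel hpne,
          Real.rpow_one]
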